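/- arXiv:1205.2784 — 3 statements merged into one kernel-verified Lean document; each statement's English description precedes it below -/
import Mathlib

section
/- If the hyperplane H_l is non-degenerate (ν_l ≠ 0), the Poincaré polynomial π(H, q) = Σ_{S⊆[n]} (−1)^{|S|} (1+q)^{dim V_S} satisfies π(H, q) = π(H − H_l, q) − (1+q)·π(H^{H_l}, q). -/
open Polynomial

section Aux

variable {V : Type*} [NormedAddCommGroup V] [InnerProductSpace ℝ V] [FiniteDimensional ℝ V]

lemma span_insert_eq_sup (w : V) (s : Set V) :
    Submodule.span ℝ (insert w s) =
      Submodule.span ℝ ((fun v => (Submodule.orthogonalProjectionOnto ((ℝ ∙ w)ᗮ) v : V)) '' s) ⊔ (ℝ ∙ w) := by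
  have hWle : (ℝ ∙ w) ≤ Submodule.span ℝ (insert w s) := by
    rw [Submodule.span_singleton_le_iff_mem]
    exact Submodule.subset_span (Set.mem_insert _ _)
  have hmem : ∀ v : V, v - (Submodule.orthogonalProjectionOnto ((ℝ ∙ w)ᗮ) v : V) ∈ (ℝ ∙ w) := by
    intro v
    have := Submodule.sub_starProjection_mem_orthogonal (K := (ℝ ∙ w)ᗮ) v
    rwa [Submodule.orthogonal_orthogonal] at this
  apply le_antisymm
  · rw [Submodule.span_le]
    rintro v (rfl | hv)
    · exact Submodule.mem_sup_right (Submodule.mem_span_singleton_self _)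
    · have h1 : (Submodule.orthogonalProjectionOnto ((ℝ ∙ w)ᗮ) v : V) ∈
          Submodule.span ℝ ((fun v => (Submodule.orthogonalProjectionOnto ((ℝ ∙ w)ᗮ) v : V)) '' s) :=
        Submodule.subset_span ⟨v, hv, rfl⟩
      have hv2 : v = (Submodule.orthogonalProjectionOnto ((ℝ ∙ w)ᗮ) v : V) +
          (v - (Submodule.orthogonalProjectionOnto ((ℝ ∙ w)ᗮ) v : V)) := by abel
      show v ∈ Submodule.span ℝ ((fun v => (Submodule.orthogonalProjectionOnto ((ℝ ∙ w)ᗮ) v : V)) '' s)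
        ⊔ (ℝ ∙ w)
      rw [hv2]
      exact Submodule.add_mem _ (Submodule.mem_sup_left h1) (Submodule.mem_sup_right (hmem v))
  · apply sup_le _ hWle
    rw [Submodule.span_le]
    rintro _ ⟨v, hv, rfl⟩
    show (Submodule.orthogonalProjectionOnto ((ℝ ∙ w)ᗮ) v : V) ∈ Submodule.span ℝ (insert w s)
    have hv2 : (Submodule.orthogonalProjectionOnto ((ℝ ∙ w)ᗮ) v : V) =
        v - (v - (Submodule.orthogonalProjectionOnto ((ℝ ∙ w)ᗮ) v : V)) := by abel
    rw [hv2]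
    exact Submodule.sub_mem _ (Submodule.subset_span (Set.mem_insert_of_mem _ hv))
      (hWle (hmem v))

lemma finrank_sup_singleton {w : V} (hw : w ≠ 0) {A : Submodule ℝ V} (hA : A ≤ (ℝ ∙ w)ᗮ) :
    Module.finrank ℝ ↥(A ⊔ (ℝ ∙ w)) = Module.finrank ℝ ↥A + 1 := by
  have hdisj : A ⊓ (ℝ ∙ w) = ⊥ := by
    rw [eq_bot_iff]
    refine le_trans (inf_le_inf_right _ hA) ?_
    rw [inf_comm]
    exact ((Submodule.orthogonal_disjoint (ℝ ∙ w)).le_bot)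
  have := Submodule.finrank_sup_add_finrank_inf_eq A (ℝ ∙ w)
  rw [hdisj, finrank_span_singleton hw] at this
  simpa using this

lemma sum_finset_split {M : Type*} [AddCommMonoid M] {n : ℕ} (l : Fin n)
    (f : Finset (Fin n) → M) :
    ∑ S : Finset (Fin n), f S =
      (∑ T : Finset {i : Fin n // i ≠ l},
        f (T.map (Function.Embedding.subtype _))) +
      (∑ T : Finset {i : Fin n // i ≠ l},
        f (insert l (T.map (Function.Embedding.subtype _)))) := by
  classical
  have hfil : ∀ S : Finset (Fin n),
      Finset.filter (fun x => x ≠ l) S = S ↔ l ∉ S := by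
    intro S
    rw [Finset.filter_eq_self]
    constructor
    · intro h hlS
      exact (h l hlS) rfl
    · intro h x hx hxl
      exact h (hxl ▸ hx)
  have hsubmap : ∀ T : Finset {i : Fin n // i ≠ l},
      (T.map (Function.Embedding.subtype _)).subtype (· ≠ l) = T := by
    intro T
    ext ⟨a, ha⟩
    simp only [Finset.mem_subtype, Finset.mem_map, Function.Embedding.coe_subtype]
    constructor
    · rintro ⟨b, hb, hba⟩
      rwa [show b = ⟨a, ha⟩ from Subtype.ext hba] at hb
    · intro h
      exact ⟨⟨a, ha⟩, h, rfl⟩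
  have hnotmem : ∀ T : Finset {i : Fin n // i ≠ l},
      l ∉ T.map (Function.Embedding.subtype _) := by
    intro T hlT
    obtain ⟨b, _, hb⟩ := Finset.mem_map.mp hlT
    exact b.2 hb
  rw [← Finset.sum_filter_add_sum_filter_not Finset.univ
    (fun S : Finset (Fin n) => l ∉ S) f]
  congr 1
  · refine Finset.sum_nbij' (fun S => S.subtype (· ≠ l))
      (fun T => T.map (Function.Embedding.subtype _)) ?_ ?_ ?_ ?_ ?_
    · intro a _; exact Finset.mem_univ _
    · intro T _
      simp only [Finset.mem_filter, Finset.mem_univ, true_and]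
      exact hnotmem T
    · intro S hS
      simp only [Finset.mem_filter, Finset.mem_univ, true_and] at hS
      rw [Finset.subtype_map, (hfil S).mpr hS]
    · intro T _
      exact hsubmap T
    · intro S hS
      simp only [Finset.mem_filter, Finset.mem_univ, true_and] at hS
      rw [Finset.subtype_map, (hfil S).mpr hS]
  · simp only [not_not]
    refine Finset.sum_nbij' (fun S => (S.erase l).subtype (· ≠ l))
      (fun T => insert l (T.map (Function.Embedding.subtype _))) ?_ ?_ ?_ ?_ ?_
    · intro a _; exact Finset.mem_univ _
    · intro T _
      simp only [Finset.mem_filter, Finset.mem_univ, true_and]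
      exact Finset.mem_insert_self _ _
    · intro S hS
      simp only [Finset.mem_filter, Finset.mem_univ, true_and] at hS
      have h1 : l ∉ S.erase l := Finset.notMem_erase _ _
      show insert l (((S.erase l).subtype (· ≠ l)).map (Function.Embedding.subtype _)) = S
      rw [Finset.subtype_map, (hfil _).mpr h1, Finset.insert_erase hS]
    · intro T _
      show ((insert l (T.map (Function.Embedding.subtype _))).erase l).subtype (· ≠ l) = T
      rw [Finset.erase_insert (hnotmem T)]
      exact hsubmap T
    · intro S hS
      simp only [Finset.mem_filter, Finset.mem_univ, true_and] at hS
      have h1 : l ∉ S.erase l := Finset.notMem_erase _ _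
      show f S = f (insert l (((S.erase l).subtype (· ≠ l)).map (Function.Embedding.subtype _)))
      rw [Finset.subtype_map, (hfil _).mpr h1, Finset.insert_erase hS]

end Aux

/-- The Poincaré polynomial `π(H, q) = Σ_{S⊆[n]} (−1)^{|S|} (1+q)^{dim V_S}` of the
arrangement determined by the vectors `ν i`, where `V_S = span {νᵢ : i ∈ S}`. -/
noncomputable def poincarePoly {V : Type*} [NormedAddCommGroup V] [InnerProductSpace ℝ V]
    {ι : Type*} [Fintype ι] [DecidableEq ι] (ν : ι → V) : Polynomial ℤ :=
  ∑ S : Finset ι, (-1 : Polynomial ℤ) ^ S.card *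
    (1 + X) ^ (Module.finrank ℝ ↥(Submodule.span ℝ (ν '' ↑S)))

/-- If `ν_l ≠ 0`, the Poincaré polynomial satisfies
`π(H, q) = π(H − H_l, q) − (1+q)·π(H^{H_l}, q)`, where the restriction `H^{H_l}` is
given by the orthogonal projections of the remaining vectors onto `H_l = ν_l^⊥`. -/
theorem poincarePoly_deletion_restriction {V : Type*} [NormedAddCommGroup V]
    [InnerProductSpace ℝ V] [FiniteDimensional ℝ V]
    {n : ℕ} (ν : Fin n → V) (l : Fin n) (hl : ν l ≠ 0) :
    poincarePoly ν =
      poincarePoly (fun i : {i : Fin n // i ≠ l} => ν i) -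
        (1 + X) * poincarePoly (fun i : {i : Fin n // i ≠ l} =>
          (Submodule.orthogonalProjectionOnto ((ℝ ∙ ν l)ᗮ) (ν i) : V)) := by
  classical
  have himg : ∀ (g : Fin n → V) (T : Finset {i : Fin n // i ≠ l}),
      g '' ↑(T.map (Function.Embedding.subtype _)) = (fun i : {i : Fin n // i ≠ l} => g ↑i) '' ↑T := by
    intro g T
    rw [Finset.coe_map, Set.image_image]
    rfl
  have hnotmem : ∀ T : Finset {i : Fin n // i ≠ l},
      l ∉ T.map (Function.Embedding.subtype _) := by
    intro T hlT
    obtain ⟨b, _, hb⟩ := Finset.mem_map.mp hlT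
    exact b.2 hb
  rw [poincarePoly, sum_finset_split l]
  have hdel : (∑ T : Finset {i : Fin n // i ≠ l},
      (-1 : Polynomial ℤ) ^ (T.map (Function.Embedding.subtype _)).card *
        (1 + X) ^ (Module.finrank ℝ ↥(Submodule.span ℝ
          (ν '' ↑(T.map (Function.Embedding.subtype _)))))) =
      poincarePoly (fun i : {i : Fin n // i ≠ l} => ν i) := by
    rw [poincarePoly]
    refine Finset.sum_congr rfl fun T _ => ?_
    rw [Finset.card_map, himg ν T]
  have hres : (∑ T : Finset {i : Fin n // i ≠ l},
      (-1 : Polynomial ℤ) ^ (insert l (T.map (Function.Embedding.subtype _))).card *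
        (1 + X) ^ (Module.finrank ℝ ↥(Submodule.span ℝ
          (ν '' ↑(insert l (T.map (Function.Embedding.subtype _))))))) =
      - ((1 + X) * poincarePoly (fun i : {i : Fin n // i ≠ l} =>
          (Submodule.orthogonalProjectionOnto ((ℝ ∙ ν l)ᗮ) (ν i) : V))) := by
    rw [poincarePoly, Finset.mul_sum, ← Finset.sum_neg_distrib]
    refine Finset.sum_congr rfl fun T _ => ?_
    have hcard : (insert l (T.map (Function.Embedding.subtype _))).card = T.card + 1 := by
      rw [Finset.card_insert_of_notMem (hnotmem T), Finset.card_map]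
    have himg2 : ν '' ↑(insert l (T.map (Function.Embedding.subtype _))) =
        insert (ν l) ((fun i : {i : Fin n // i ≠ l} => ν ↑i) '' ↑T) := by
      rw [Finset.coe_insert, Set.image_insert_eq, himg ν T]
    have hproj : ((fun i : {i : Fin n // i ≠ l} =>
          (Submodule.orthogonalProjectionOnto ((ℝ ∙ ν l)ᗮ) (ν ↑i) : V)) '' ↑T)
        = (fun v => (Submodule.orthogonalProjectionOnto ((ℝ ∙ ν l)ᗮ) v : V)) ''
          ((fun i : {i : Fin n // i ≠ l} => ν ↑i) '' ↑T) := by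
      rw [Set.image_image]
    have hle : Submodule.span ℝ ((fun v => (Submodule.orthogonalProjectionOnto ((ℝ ∙ ν l)ᗮ) v : V)) ''
          ((fun i : {i : Fin n // i ≠ l} => ν ↑i) '' ↑T)) ≤ (ℝ ∙ ν l)ᗮ := by
      rw [Submodule.span_le]
      rintro _ ⟨v, _, rfl⟩
      exact Submodule.coe_mem _
    have hrank : Module.finrank ℝ ↥(Submodule.span ℝ
          (ν '' ↑(insert l (T.map (Function.Embedding.subtype _))))) =
        Module.finrank ℝ ↥(Submodule.span ℝ ((fun i : {i : Fin n // i ≠ l} =>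
          (Submodule.orthogonalProjectionOnto ((ℝ ∙ ν l)ᗮ) (ν ↑i) : V)) '' ↑T)) + 1 := by
      rw [himg2, span_insert_eq_sup, hproj, finrank_sup_singleton hl hle]
    rw [hcard, hrank]
    ring
  rw [hdel, hres]
  ring
end

section
/- The modified Tutte polynomial and the usual Tutte polynomial of a central arrangement in a k-dimensional space satisfy T̂(H; x, y) = (−1)^k (−x−1)^{dim H_{[n]}} T(H; −x, −y), where T(H; x, y) = Σ_{S⊆[n]} (x−1)^{dim H_S − dim H_{[n]}} (y−1)^{dim W_S}. -/
/-- The modified Tutte polynomial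
`T̂(H; x, y) = Σ_{S⊆[n]} (−1)^{|S|} (1+x)^{dim H_S} (1+y)^{dim W_S}`, evaluated at
real `x, y`, of the central arrangement determined by the vectors `ν i`. -/
noncomputable def tutteHatEval {V : Type*} [NormedAddCommGroup V] [InnerProductSpace ℝ V]
    {ι : Type*} [Fintype ι] [DecidableEq ι] (ν : ι → V) (x y : ℝ) : ℝ :=
  ∑ S : Finset ι, (-1 : ℝ) ^ S.card *
    (1 + x) ^ (Module.finrank ℝ ↥(⨅ i ∈ S, (ℝ ∙ ν i)ᗮ)) *
    (1 + y) ^ (Module.finrank ℝ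
      ↥(LinearMap.ker (Fintype.linearCombination ℝ ν) ⊓
          ⨅ r ∈ Sᶜ, LinearMap.ker (LinearMap.proj (R := ℝ) (φ := fun _ : ι => ℝ) r)))

/-- The usual Tutte polynomial
`T(H; x, y) = Σ_{S⊆[n]} (x−1)^{dim H_S − dim H_[n]} (y−1)^{dim W_S}`, evaluated at real
`x, y` (the exponent `dim H_S − dim H_[n]` is a natural number since `H_[n] ⊆ H_S`). -/
noncomputable def tutteEval {V : Type*} [NormedAddCommGroup V] [InnerProductSpace ℝ V]
    {ι : Type*} [Fintype ι] [DecidableEq ι] (ν : ι → V) (x y : ℝ) : ℝ :=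
  ∑ S : Finset ι,
    (x - 1) ^ (Module.finrank ℝ ↥(⨅ i ∈ S, (ℝ ∙ ν i)ᗮ) -
        Module.finrank ℝ ↥(⨅ i : ι, (ℝ ∙ ν i)ᗮ)) *
    (y - 1) ^ (Module.finrank ℝ
      ↥(LinearMap.ker (Fintype.linearCombination ℝ ν) ⊓
          ⨅ r ∈ Sᶜ, LinearMap.ker (LinearMap.proj (R := ℝ) (φ := fun _ : ι => ℝ) r)))

section Aux

variable {V : Type*} [NormedAddCommGroup V] [InnerProductSpace ℝ V] [FiniteDimensional ℝ V]
  {ι : Type*} [Fintype ι] [DecidableEq ι]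

/-- Extension by zero of functions on `S` to functions on `ι`. -/
def extMap (S : Finset ι) : (↥S → ℝ) →ₗ[ℝ] (ι → ℝ) where
  toFun c i := if h : i ∈ S then c ⟨i, h⟩ else 0
  map_add' c d := by funext i; by_cases h : i ∈ S <;> simp [h]
  map_smul' r c := by funext i; by_cases h : i ∈ S <;> simp [h]

lemma extMap_injective (S : Finset ι) : Function.Injective (extMap (ι := ι) S) := by
  intro c d h
  funext i
  have := congrFun h (i : ι)
  simpa [extMap, i.2] using this

lemma range_extMap (S : Finset ι) :
    LinearMap.range (extMap (ι := ι) S) =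
      ⨅ r ∈ Sᶜ, LinearMap.ker (LinearMap.proj (R := ℝ) (φ := fun _ : ι => ℝ) r) := by
  apply le_antisymm
  · rintro _ ⟨c, rfl⟩
    simp only [Submodule.mem_iInf, LinearMap.mem_ker, Finset.mem_compl]
    intro r hr
    simp [extMap, hr, LinearMap.proj]
  · intro g hg
    simp only [Submodule.mem_iInf, LinearMap.mem_ker, Finset.mem_compl] at hg
    refine ⟨fun j => g (j : ι), ?_⟩
    funext i
    by_cases h : i ∈ S
    · simp [extMap, h]
    · simp only [extMap, LinearMap.coe_mk, AddHom.coe_mk, dif_neg h]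
      have := hg i h
      simpa [LinearMap.proj] using this.symm

lemma comp_extMap (S : Finset ι) (ν : ι → V) :
    (Fintype.linearCombination ℝ ν) ∘ₗ extMap (ι := ι) S =
      Fintype.linearCombination ℝ (fun i : ↥S => ν i) := by
  refine LinearMap.ext fun c => ?_
  simp only [LinearMap.comp_apply, Fintype.linearCombination_apply, extMap,
    LinearMap.coe_mk, AddHom.coe_mk]
  rw [show (∑ i : ι, (if h : i ∈ S then c ⟨i, h⟩ else 0) • ν i)
      = ∑ i ∈ S, (if h : i ∈ S then c ⟨i, h⟩ else 0) • ν i from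
    (Finset.sum_subset (Finset.subset_univ S) (by intro i _ hi; simp [hi])).symm]
  rw [← Finset.sum_attach S (fun i => (if h : i ∈ S then c ⟨i, h⟩ else 0) • ν i)]
  rw [Finset.univ_eq_attach]
  exact Finset.sum_congr rfl (fun i _ => by simp [i.2])

lemma dimW_eq (S : Finset ι) (ν : ι → V) :
    Module.finrank ℝ
      ↥(LinearMap.ker (Fintype.linearCombination ℝ ν) ⊓
          ⨅ r ∈ Sᶜ, LinearMap.ker (LinearMap.proj (R := ℝ) (φ := fun _ : ι => ℝ) r)) +
      Module.finrank ℝ ↥(Submodule.span ℝ (ν '' (S : Set ι))) = S.card := by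
  classical
  have hWmap : LinearMap.ker (Fintype.linearCombination ℝ ν) ⊓
      (⨅ r ∈ Sᶜ, LinearMap.ker (LinearMap.proj (R := ℝ) (φ := fun _ : ι => ℝ) r)) =
      Submodule.map (extMap (ι := ι) S)
        (LinearMap.ker (Fintype.linearCombination ℝ (fun i : ↥S => ν i))) := by
    rw [← comp_extMap S ν, LinearMap.ker_comp, Submodule.map_comap_eq, range_extMap, inf_comm]
  have h1 : Module.finrank ℝ
      ↥(LinearMap.ker (Fintype.linearCombination ℝ ν) ⊓
        ⨅ r ∈ Sᶜ, LinearMap.ker (LinearMap.proj (R := ℝ) (φ := fun _ : ι => ℝ) r)) =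
      Module.finrank ℝ
        ↥(LinearMap.ker (Fintype.linearCombination ℝ (fun i : ↥S => ν i))) := by
    rw [hWmap]
    exact (LinearEquiv.finrank_eq
      (Submodule.equivMapOfInjective _ (extMap_injective S) _)).symm
  have h2 : LinearMap.range (Fintype.linearCombination ℝ (fun i : ↥S => ν i)) =
      Submodule.span ℝ (ν '' (S : Set ι)) := by
    rw [Fintype.range_linearCombination]
    congr 1
    ext v
    simp [Set.range, Subtype.exists]
  have h3 := LinearMap.finrank_range_add_finrank_ker
    (Fintype.linearCombination ℝ (fun i : ↥S => ν i))
  rw [h2] at h3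
  have h4 : Module.finrank ℝ (↥S → ℝ) = S.card := by
    simp [Module.finrank_fintype_fun_eq_card]
  rw [h1, ← h4, add_comm]
  exact h3

lemma dimH_eq (S : Finset ι) (ν : ι → V) :
    Module.finrank ℝ ↥(⨅ i ∈ S, (ℝ ∙ ν i)ᗮ) +
      Module.finrank ℝ ↥(Submodule.span ℝ (ν '' (S : Set ι))) = Module.finrank ℝ V := by
  have hH : (⨅ i ∈ S, (ℝ ∙ ν i)ᗮ) = (Submodule.span ℝ (ν '' (S : Set ι)))ᗮ := by
    have hspan : Submodule.span ℝ (ν '' (S : Set ι)) = ⨆ i : ↥S, (ℝ ∙ ν (i : ι)) := by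
      rw [show ν '' (S : Set ι) = Set.range (fun i : ↥S => ν (i : ι)) by
        ext v; simp [Set.range, Subtype.exists]]
      rw [Submodule.span_range_eq_iSup]
    rw [hspan, ← Submodule.iInf_orthogonal]
    rw [iInf_subtype]
  rw [hH, add_comm]
  exact Submodule.finrank_add_finrank_orthogonal _

/-- The key dimension identity: `|S| + dim H_S = dim V + dim W_S`. -/
lemma key_dim (S : Finset ι) (ν : ι → V) :
    S.card + Module.finrank ℝ ↥(⨅ i ∈ S, (ℝ ∙ ν i)ᗮ) =
      Module.finrank ℝ V + Module.finrank ℝ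
        ↥(LinearMap.ker (Fintype.linearCombination ℝ ν) ⊓
            ⨅ r ∈ Sᶜ, LinearMap.ker (LinearMap.proj (R := ℝ) (φ := fun _ : ι => ℝ) r)) := by
  have h1 := dimW_eq S ν
  have h2 := dimH_eq S ν
  omega

end Aux

/-- For a central arrangement in a `k`-dimensional space,
`T̂(H; x, y) = (−1)^k (−x−1)^{dim H_[n]} T(H; −x, −y)`. -/
theorem tutteHat_eq_tutte {V : Type*} [NormedAddCommGroup V]
    [InnerProductSpace ℝ V] [FiniteDimensional ℝ V]
    {n : ℕ} (ν : Fin n → V) (x y : ℝ) :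
    tutteHatEval ν x y =
      (-1 : ℝ) ^ (Module.finrank ℝ V) *
        (-x - 1) ^ (Module.finrank ℝ ↥(⨅ i : Fin n, (ℝ ∙ ν i)ᗮ)) *
        tutteEval ν (-x) (-y) := by
  unfold tutteHatEval tutteEval
  rw [Finset.mul_sum]
  refine Finset.sum_congr rfl fun S _ => ?_
  set a := Module.finrank ℝ ↥(⨅ i ∈ S, (ℝ ∙ ν i)ᗮ) with ha
  set b := Module.finrank ℝ
      ↥(LinearMap.ker (Fintype.linearCombination ℝ ν) ⊓
          ⨅ r ∈ Sᶜ, LinearMap.ker (LinearMap.proj (R := ℝ) (φ := fun _ : Fin n => ℝ) r)) with hb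
  set m := Module.finrank ℝ ↥(⨅ i : Fin n, (ℝ ∙ ν i)ᗮ) with hm
  set k := Module.finrank ℝ V with hk
  have hma : m ≤ a := by
    apply Submodule.finrank_mono
    exact le_iInf fun i => le_iInf fun _ => iInf_le _ i
  have hkey : S.card + a = k + b := key_dim S ν
  have hxx : (-x - 1 : ℝ) = -(1 + x) := by ring
  have hyy : (-y - 1 : ℝ) = -(1 + y) := by ring
  have hpow : (-x - 1 : ℝ) ^ m * ((-x - 1) ^ (a - m)) = (-x - 1) ^ a := by
    rw [← pow_add, Nat.add_sub_cancel' hma]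
  calc (-1 : ℝ) ^ S.card * (1 + x) ^ a * (1 + y) ^ b
      = (-1 : ℝ) ^ (k + b + a) * (1 + x) ^ a * (1 + y) ^ b := by
        congr 2
        have h2 : S.card + 2 * a = k + b + a := by omega
        calc ((-1 : ℝ)) ^ S.card = (-1) ^ S.card * ((-1 : ℝ) ^ 2) ^ a := by norm_num
          _ = (-1) ^ (S.card + 2 * a) := by rw [← pow_mul, ← pow_add]
          _ = (-1) ^ (k + b + a) := by rw [h2]
    _ = (-1 : ℝ) ^ k * ((-x - 1) ^ a * (-y - 1) ^ b) := by
        rw [hxx, hyy, neg_pow (1 + x), neg_pow (1 + y)]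
        ring
    _ = (-1 : ℝ) ^ k * (-x - 1) ^ m * ((-x - 1) ^ (a - m) * (-y - 1) ^ b) := by
        rw [← hpow]; ring
end

section
/- For a deletion-restriction triple, the dependency space of the restricted arrangement is canonically isomorphic to a dependency space of the original arrangement: for S ⊆ [n] − {l}, the map φ sending a dependency (w_s)_{s∈S} among the projections P(ν_s) onto H_l to the vector with those coordinates on S and coordinate −w_l in position l (where Σ_{s∈S} w_s ν_s = w_l ν_l) is a linear isomorphism W_S^{H_l} ≅ W_{S∪{l}}. -/
open RealInnerProductSpace

/-- For a deletion–restriction triple (with `ν_l ≠ 0`), the dependency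
space of the restricted arrangement is canonically isomorphic to a dependency space of
the original arrangement.  The map `φ` sends a dependency `(w_s)_{s∈S}` among the
orthogonal projections `P(ν_s)` onto `H_l = ν_l^⊥` to the vector with the same
coordinates on `S` and coordinate `−w_l` in position `l`, where
`Σ_{s∈S} w_s ν_s = w_l ν_l` (so `w_l = ⟪ν_l, Σᵢ wᵢ νᵢ⟫ / ⟪ν_l, ν_l⟫`).  This `φ` is a
linear map restricting to a bijection `W_S^{H_l} ≃ W_{S∪{l}}`, hence a linear
isomorphism. -/
theorem restriction_dependency_space_iso {V : Type*} [NormedAddCommGroup V]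
    [InnerProductSpace ℝ V] [FiniteDimensional ℝ V]
    {n : ℕ} (ν : Fin n → V) (l : Fin n) (hl : ν l ≠ 0)
    (S : Finset (Fin n)) (hS : l ∉ S)
    -- the linear map computing `w_l` from `w`:
    (c : (Fin n → ℝ) →ₗ[ℝ] ℝ)
    (hc : c = (⟪ν l, ν l⟫)⁻¹ •
      ((innerSL ℝ (ν l)).toLinearMap ∘ₗ Fintype.linearCombination ℝ ν))
    -- the linear map `φ : w ↦ w − w_l • e_l` (so `(φ w) l = −w_l` for `w` supported on `S`):
    (φ : (Fin n → ℝ) →ₗ[ℝ] (Fin n → ℝ))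
    (hφ : φ = LinearMap.id -
      (LinearMap.toSpanSingleton ℝ (Fin n → ℝ) (Pi.single l 1)) ∘ₗ c) :
    Set.BijOn φ
      -- the space `W_S^{H_l}` of dependencies, supported on `S`, among the projections `P (ν s)`:
      ↑(LinearMap.ker (Fintype.linearCombination ℝ
            (fun i => (Submodule.orthogonalProjectionOnto ((ℝ ∙ ν l)ᗮ) (ν i) : V))) ⊓
          ⨅ r ∈ Sᶜ, LinearMap.ker (LinearMap.proj (R := ℝ) (φ := fun _ : Fin n => ℝ) r))
      -- the space `W_{S∪{l}}` of dependencies of `ν` supported on `S ∪ {l}`: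
      ↑(LinearMap.ker (Fintype.linearCombination ℝ ν) ⊓
          ⨅ r ∈ (insert l S)ᶜ,
            LinearMap.ker (LinearMap.proj (R := ℝ) (φ := fun _ : Fin n => ℝ) r)) := by

  have hinner : ⟪ν l, ν l⟫ ≠ 0 := inner_self_ne_zero.mpr hl
  -- value of φ at a point
  have hφ' : ∀ w : Fin n → ℝ, φ w = w - c w • (Pi.single l 1 : Fin n → ℝ) := by
    intro w; simp [hφ]
  have hc' : ∀ w : Fin n → ℝ,
      c w = (⟪ν l, ν l⟫)⁻¹ * ⟪ν l, Fintype.linearCombination ℝ ν w⟫ := by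
    intro w; simp [hc]
  -- the projected linear combination
  have hP : ∀ w : Fin n → ℝ,
      Fintype.linearCombination ℝ
        (fun i => (Submodule.orthogonalProjectionOnto ((ℝ ∙ ν l)ᗮ) (ν i) : V)) w =
      (Submodule.orthogonalProjectionOnto ((ℝ ∙ ν l)ᗮ) (Fintype.linearCombination ℝ ν w) : V) := by
    intro w
    simp only [Fintype.linearCombination_apply, map_sum, map_smul, Submodule.coe_sum,
      Submodule.coe_smul]
  -- membership characterization of supports
  have hsupp : ∀ (T : Finset (Fin n)) (w : Fin n → ℝ),
      w ∈ (⨅ r ∈ Tᶜ, LinearMap.ker (LinearMap.proj (R := ℝ) (φ := fun _ : Fin n => ℝ) r)) ↔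
        ∀ r ∉ T, w r = 0 := by
    intro T w
    simp [Submodule.mem_iInf, LinearMap.mem_ker]
  -- characterization of membership in the left set
  have hA : ∀ w : Fin n → ℝ,
      (Fintype.linearCombination ℝ
        (fun i => (Submodule.orthogonalProjectionOnto ((ℝ ∙ ν l)ᗮ) (ν i) : V)) w = 0) ↔
      Fintype.linearCombination ℝ ν w = c w • ν l := by
    intro w
    rw [hP]
    rw [ZeroMemClass.coe_eq_zero]
    rw [Submodule.orthogonalProjectionOnto_eq_zero_iff, Submodule.orthogonal_orthogonal,
      Submodule.mem_span_singleton]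
    constructor
    · rintro ⟨t, ht⟩
      have : c w = t := by
        rw [hc', ← ht, real_inner_smul_right]
        field_simp
      rw [this, ht]
    · intro h; exact ⟨c w, h.symm⟩
  constructor
  · -- MapsTo
    rintro w ⟨hw1, hw2⟩
    rw [SetLike.mem_coe, LinearMap.mem_ker] at hw1
    rw [SetLike.mem_coe] at hw2
    rw [hsupp] at hw2
    have hdep := (hA w).mp hw1
    constructor
    · rw [SetLike.mem_coe, LinearMap.mem_ker, hφ', map_sub, map_smul, hdep]
      simp [Fintype.linearCombination_apply, Pi.single_apply, Finset.sum_ite_eq']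
    · rw [SetLike.mem_coe, hsupp]
      intro r hr
      rw [Finset.mem_insert, not_or] at hr
      rw [hφ']
      simp [hw2 r hr.2, Pi.single_apply, hr.1]
  constructor
  · -- InjOn
    rintro w1 ⟨_, hw1s⟩ w2 ⟨_, hw2s⟩ heq
    rw [SetLike.mem_coe, hsupp] at hw1s hw2s
    funext r
    rcases eq_or_ne r l with rfl | hr
    · rw [hw1s r hS, hw2s r hS]
    · have := congrFun heq r
      rw [hφ', hφ'] at this
      simpa [Pi.single_apply, hr] using this
  · -- SurjOn
    rintro u ⟨hu1, hu2⟩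
    rw [SetLike.mem_coe, LinearMap.mem_ker] at hu1
    rw [SetLike.mem_coe, hsupp] at hu2
    set w : Fin n → ℝ := u - u l • (Pi.single l 1 : Fin n → ℝ) with hw
    have hcomb : Fintype.linearCombination ℝ ν w = (- u l) • ν l := by
      rw [hw, map_sub, map_smul, hu1]
      simp [Fintype.linearCombination_apply, Pi.single_apply, Finset.sum_ite_eq']
    have hcw : c w = - u l := by
      rw [hc', hcomb, real_inner_smul_right]
      field_simp
    refine ⟨w, ⟨?_, ?_⟩, ?_⟩
    · rw [SetLike.mem_coe, LinearMap.mem_ker, hA, hcomb, hcw]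
    · rw [SetLike.mem_coe, hsupp]
      intro r hr
      rcases eq_or_ne r l with rfl | hrl
      · simp [hw]
      · have : r ∉ insert l S := by simp [hrl, hr]
        simp [hw, hu2 r this, Pi.single_apply, hrl]
    · rw [hφ', hcw, hw]
      simp
end
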